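/- Let d, n, T ≥ 1 be natural numbers, Γ > 0, C > 0, β > 0 with n^{-β} ≤ C². For t = 1,…,T and i = 1,…,n let ℓ_{t,i} : ℝ^d → ℝ be convex and Γ-Lipschitz. Set γ̲ = n^{-β}, γ̄ = C², Λ = {ϑ ∈ ℝ^d : ‖ϑ‖ ≤ C} × [γ̲, γ̄], L = √(n²Γ⁴/4 + 4C²/γ̲² + 4C⁴/γ̲⁴), α = (C/L)√((4+C²)/T), and L_t(ϑ,γ) = inf_{‖θ‖≤C} { Σ_{i=1}^n ℓ_{t,i}(θ) + γΓ²n/2 + ‖θ-ϑ‖²/(2γ) }. Let λ_1 ∈ Λ and, for t = 1,…,T, let λ_{t+1} ∈ Λ minimize λ ↦ L_t(λ) + ‖λ - λ_t‖²/(2α) over Λ, and suppose s_1,…,s_T ∈ ℝ satisfy s_t ≤ L_t(λ_t). Then for all θ_1,…,θ_T with ‖θ_t‖ ≤ C and all γ ∈ [γ̲, γ̄], writing θ̄ = (1/T)Σ_s θ_s and σ = √((1/T)Σ_t ‖θ_t - θ̄‖²): Σ_{t=1}^T s_t ≤ Σ_{t=1}^T Σ_{i=1}^n ℓ_{t,i}(θ_t)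 + γΓ²nT/2 + Tσ²/(2γ) + C L √((4+C²)T). -/

import Mathlib

set_option maxHeartbeats 1000000

noncomputable def fAux {d : ℕ} (ℓ : ℕ → ℕ → EuclideanSpace ℝ (Fin d) → ℝ) (Γ : ℝ) (n : ℕ)
    (t : ℕ) (th ϑ : EuclideanSpace ℝ (Fin d)) (g : ℝ) : ℝ :=
  ∑ i ∈ Finset.Icc 1 n, ℓ t i th + g * Γ ^ 2 * n / 2 + ‖th - ϑ‖ ^ 2 / (2 * g)

lemma combo_pos (g g' c : ℝ) (hg : 0 < g) (hg' : 0 < g') (hc : 0 ≤ c) (hc1 : c ≤ 1) :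
    0 < c*g + (1-c)*g' := by
  have h1 : c * min g g' ≤ c * g := mul_le_mul_of_nonneg_left (min_le_left g g') hc
  have h2 : (1-c) * min g g' ≤ (1-c) * g' :=
    mul_le_mul_of_nonneg_left (min_le_right g g') (by linarith)
  have h3 : 0 < min g g' := lt_min hg hg'
  nlinarith

lemma combo_mem_Icc (lo hi g g' c : ℝ) (hg : g ∈ Set.Icc lo hi) (hg' : g' ∈ Set.Icc lo hi)
    (hc : 0 ≤ c) (hc1 : c ≤ 1) : c*g + (1-c)*g' ∈ Set.Icc lo hi := by
  obtain ⟨h1, h2⟩ := hg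
  obtain ⟨h3, h4⟩ := hg'
  constructor
  · nlinarith
  · nlinarith

lemma norm_combo_le {E : Type*} [NormedAddCommGroup E] [NormedSpace ℝ E]
    (x y : E) (C c : ℝ) (hx : ‖x‖ ≤ C) (hy : ‖y‖ ≤ C) (hc : 0 ≤ c) (hc1 : c ≤ 1) :
    ‖c • x + (1-c) • y‖ ≤ C := by
  calc ‖c • x + (1-c) • y‖ ≤ ‖c • x‖ + ‖(1-c) • y‖ := norm_add_le _ _
    _ = c * ‖x‖ + (1-c) * ‖y‖ := by
        rw [norm_smul, norm_smul, Real.norm_of_nonneg hc, Real.norm_of_nonneg (by linarith)]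
    _ ≤ c * C + (1-c) * C :=
        add_le_add (mul_le_mul_of_nonneg_left hx hc)
          (mul_le_mul_of_nonneg_left hy (by linarith))
    _ = C := by ring

lemma qol_scalar (x y g g' c : ℝ) (hx : 0 ≤ x) (hy : 0 ≤ y)
    (hg : 0 < g) (hg' : 0 < g') (hc : 0 ≤ c) (hc1 : c ≤ 1) :
    (c*x + (1-c)*y)^2 / (2*(c*g + (1-c)*g')) ≤ c*(x^2/(2*g)) + (1-c)*(y^2/(2*g')) := by
  have hden : 0 < c*g + (1-c)*g' := combo_pos g g' c hg hg' hc hc1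
  rw [div_le_iff₀ (by positivity), mul_comm]
  have h2 : c*(x^2/(2*g)) + (1-c)*(y^2/(2*g')) = (c*x^2*g' + (1-c)*y^2*g)/(2*(g*g')) := by
    field_simp
  rw [h2, div_mul_eq_mul_div, le_div_iff₀ (by positivity)]
  nlinarith [mul_nonneg (mul_nonneg hc (by linarith : (0:ℝ) ≤ 1-c)) (sq_nonneg (x*g' - y*g))]

lemma cs2 (M cc u v : ℝ) (hM : 0 ≤ M) (hc : 0 ≤ cc) (hu : 0 ≤ u) (hv : 0 ≤ v) :
    M*u + cc*v ≤ Real.sqrt (M^2 + cc^2) * Real.sqrt (u^2 + v^2) := by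
  have h1 : Real.sqrt (M^2+cc^2) * Real.sqrt (u^2+v^2) = Real.sqrt ((M^2+cc^2)*(u^2+v^2)) :=
    (Real.sqrt_mul (by positivity) _).symm
  rw [h1]
  have h2 : (M*u+cc*v)^2 ≤ (M^2+cc^2)*(u^2+v^2) := by nlinarith [sq_nonneg (M*v - cc*u)]
  calc M*u+cc*v ≤ Real.sqrt ((M*u+cc*v)^2) := by
        rw [Real.sqrt_sq (by positivity)]
    _ ≤ _ := Real.sqrt_le_sqrt h2

lemma norm_combo {E : Type*} [NormedAddCommGroup E] [InnerProductSpace ℝ E] (u v : E) (c : ℝ) :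
    ‖c•u + (1-c)•v‖^2 = c*‖u‖^2 + (1-c)*‖v‖^2 - c*(1-c)*‖u-v‖^2 := by
  have e1 : ∀ w : E, ‖w‖^2 = inner ℝ w w := fun w => (real_inner_self_eq_norm_sq w).symm
  rw [e1, e1, e1, e1]
  simp only [inner_add_add_self, inner_sub_sub_self, inner_smul_left, inner_smul_right,
    RCLike.conj_to_real, real_inner_comm u v]
  ring

lemma sqrt_amgm (dd L' α : ℝ) (hd : 0 ≤ dd) (hL : 0 ≤ L') (hα : 0 < α) :
    L' * Real.sqrt dd ≤ dd/(2*α) + α*L'^2/2 := by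
  have h := Real.sq_sqrt hd
  have h2 : dd/(2*α)+α*L'^2/2 = (dd + α^2*L'^2)/(2*α) := by field_simp
  rw [h2, le_div_iff₀ (by positivity)]
  nlinarith [sq_nonneg (Real.sqrt dd - α*L'), Real.sqrt_nonneg dd]

lemma fAux_lip {d n : ℕ} (ℓ : ℕ → ℕ → EuclideanSpace ℝ (Fin d) → ℝ)
    (Γ C γlo : ℝ) (hC : 0 < C) (hγlo0 : 0 < γlo) (t : ℕ)
    (th ϑ ϑ' : EuclideanSpace ℝ (Fin d)) (g g' : ℝ)
    (hth : ‖th‖ ≤ C) (hϑ : ‖ϑ‖ ≤ C) (hϑ' : ‖ϑ'‖ ≤ C)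
    (hg : γlo ≤ g) (hg' : γlo ≤ g') :
    fAux ℓ Γ n t th ϑ g - fAux ℓ Γ n t th ϑ' g' ≤
      Real.sqrt ((n : ℝ) ^ 2 * Γ ^ 4 / 4 + 4 * C ^ 2 / γlo ^ 2 + 4 * C ^ 4 / γlo ^ 4) *
        Real.sqrt (‖ϑ - ϑ'‖ ^ 2 + (g - g') ^ 2) := by
  have hg0 : 0 < g := lt_of_lt_of_le hγlo0 hg
  have hg'0 : 0 < g' := lt_of_lt_of_le hγlo0 hg'
  set a := Γ ^ 2 * (n : ℝ) / 2 with ha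
  set b := 2 * C ^ 2 / γlo ^ 2 with hb
  set cc := 2 * C / γlo with hcc
  have ha0 : 0 ≤ a := by positivity
  have hb0 : 0 ≤ b := by positivity
  have hcc0 : 0 ≤ cc := by positivity
  set u := ‖th - ϑ‖ with hu
  set u' := ‖th - ϑ'‖ with hu'
  set x := ‖ϑ - ϑ'‖ with hx
  have hu0 : 0 ≤ u := norm_nonneg _
  have hu'0 : 0 ≤ u' := norm_nonneg _
  have hx0 : 0 ≤ x := norm_nonneg _
  have hu2C : u ≤ 2 * C := by
    have := norm_sub_le th ϑ; rw [← hu] at this; linarith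
  have hu'2C : u' ≤ 2 * C := by
    have := norm_sub_le th ϑ'; rw [← hu'] at this; linarith
  have huu' : u - u' ≤ x := by
    have h0 := norm_sub_norm_le (th - ϑ) (th - ϑ')
    have h1 : (th - ϑ) - (th - ϑ') = ϑ' - ϑ := by abel
    rw [h1, norm_sub_rev ϑ' ϑ] at h0
    exact h0
  have hdecomp : fAux ℓ Γ n t th ϑ g - fAux ℓ Γ n t th ϑ' g' =
      (g - g') * (a - u' ^ 2 / (2 * (g * g'))) + (u ^ 2 - u' ^ 2) / (2 * g) := by
    unfold fAux
    rw [← hu, ← hu', ha]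
    field_simp
    ring
  have step1 : (u ^ 2 - u' ^ 2) / (2 * g) ≤ cc * x := by
    have h2 : (u + u') * (u - u') ≤ (u + u') * x :=
      mul_le_mul_of_nonneg_left huu' (by linarith)
    have h3 : (u + u') * x ≤ 4 * C * x :=
      mul_le_mul_of_nonneg_right (by linarith) hx0
    have h4 : u ^ 2 - u' ^ 2 ≤ 4 * C * x := by nlinarith
    have h5 : (u ^ 2 - u' ^ 2) / (2 * g) ≤ (4 * C * x) / (2 * γlo) :=
      div_le_div₀ (by positivity) h4 (by positivity) (by linarith)
    calc (u ^ 2 - u' ^ 2) / (2 * g) ≤ (4 * C * x) / (2 * γlo) := h5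
      _ = cc * x := by rw [hcc]; field_simp; ring
  set M := Real.sqrt (a ^ 2 + b ^ 2) with hM
  have hM0 : 0 ≤ M := Real.sqrt_nonneg _
  have haM : a ≤ M := Real.le_sqrt_of_sq_le (by nlinarith)
  have hbM : b ≤ M := Real.le_sqrt_of_sq_le (by nlinarith)
  have hquadb : u' ^ 2 / (2 * (g * g')) ≤ b := by
    have h6 : u' ^ 2 / (2 * (g * g')) ≤ (4 * C ^ 2) / (2 * (γlo * γlo)) :=
      div_le_div₀ (by positivity) (by nlinarith) (by positivity)
        (by nlinarith)
    calc u' ^ 2 / (2 * (g * g')) ≤ (4 * C ^ 2) / (2 * (γlo * γlo)) := h6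
      _ = b := by rw [hb]; field_simp; ring
  have hquad0 : 0 ≤ u' ^ 2 / (2 * (g * g')) := by positivity
  have step2 : (g - g') * (a - u' ^ 2 / (2 * (g * g'))) ≤ M * |g - g'| := by
    have hkabs : |a - u' ^ 2 / (2 * (g * g'))| ≤ M :=
      abs_le.2 ⟨by linarith, by linarith⟩
    calc (g - g') * (a - u' ^ 2 / (2 * (g * g')))
        ≤ |(g - g') * (a - u' ^ 2 / (2 * (g * g')))| := le_abs_self _
      _ = |g - g'| * |a - u' ^ 2 / (2 * (g * g'))| := abs_mul _ _
      _ ≤ |g - g'| * M := mul_le_mul_of_nonneg_left hkabs (abs_nonneg _)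
      _ = M * |g - g'| := mul_comm _ _
  have step3 : M * |g - g'| + cc * x ≤
      Real.sqrt (M ^ 2 + cc ^ 2) * Real.sqrt (|g - g'| ^ 2 + x ^ 2) :=
    cs2 M cc |g - g'| x hM0 hcc0 (abs_nonneg _) hx0
  have hMsq : M ^ 2 + cc ^ 2 =
      (n : ℝ) ^ 2 * Γ ^ 4 / 4 + 4 * C ^ 2 / γlo ^ 2 + 4 * C ^ 4 / γlo ^ 4 := by
    rw [hM, Real.sq_sqrt (by positivity), ha, hb, hcc]
    field_simp
    ring
  have hsymm : |g - g'| ^ 2 + x ^ 2 = x ^ 2 + (g - g') ^ 2 := by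
    rw [sq_abs]; ring
  rw [hMsq, hsymm] at step3
  calc fAux ℓ Γ n t th ϑ g - fAux ℓ Γ n t th ϑ' g'
      = (g - g') * (a - u' ^ 2 / (2 * (g * g'))) + (u ^ 2 - u' ^ 2) / (2 * g) := hdecomp
    _ ≤ M * |g - g'| + cc * x := add_le_add step2 step1
    _ ≤ _ := step3

lemma fAux_convex {d n : ℕ} (ℓ : ℕ → ℕ → EuclideanSpace ℝ (Fin d) → ℝ) (Γ : ℝ) (t : ℕ)
    (hconvt : ∀ i ∈ Finset.Icc 1 n,
      ∀ x y : EuclideanSpace ℝ (Fin d), ∀ c : ℝ, 0 ≤ c → c ≤ 1 →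
        ℓ t i (c • x + (1 - c) • y) ≤ c * ℓ t i x + (1 - c) * ℓ t i y)
    (th th' ϑ ϑ' : EuclideanSpace ℝ (Fin d)) (g g' c : ℝ)
    (hg : 0 < g) (hg' : 0 < g') (hc : 0 ≤ c) (hc1 : c ≤ 1) :
    fAux ℓ Γ n t (c • th + (1-c) • th') (c • ϑ + (1-c) • ϑ') (c*g + (1-c)*g') ≤
      c * fAux ℓ Γ n t th ϑ g + (1-c) * fAux ℓ Γ n t th' ϑ' g' := by
  have hmixg : 0 < c*g + (1-c)*g' := combo_pos g g' c hg hg' hc hc1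
  have hsum : ∑ i ∈ Finset.Icc 1 n, ℓ t i (c • th + (1-c) • th') ≤
      c * ∑ i ∈ Finset.Icc 1 n, ℓ t i th + (1-c) * ∑ i ∈ Finset.Icc 1 n, ℓ t i th' := by
    rw [Finset.mul_sum, Finset.mul_sum, ← Finset.sum_add_distrib]
    exact Finset.sum_le_sum fun i hi => hconvt i hi th th' c hc hc1
  have hvec : (c • th + (1-c) • th') - (c • ϑ + (1-c) • ϑ') =
      c • (th - ϑ) + (1-c) • (th' - ϑ') := by
    rw [smul_sub, smul_sub]; abel
  have hnorm : ‖(c • th + (1-c) • th') - (c • ϑ + (1-c) • ϑ')‖ ≤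
      c * ‖th - ϑ‖ + (1-c) * ‖th' - ϑ'‖ := by
    rw [hvec]
    calc ‖c • (th - ϑ) + (1-c) • (th' - ϑ')‖
        ≤ ‖c • (th - ϑ)‖ + ‖(1-c) • (th' - ϑ')‖ := norm_add_le _ _
      _ = c * ‖th - ϑ‖ + (1-c) * ‖th' - ϑ'‖ := by
          rw [norm_smul, norm_smul, Real.norm_of_nonneg hc,
            Real.norm_of_nonneg (by linarith)]
  have hquad : ‖(c • th + (1-c) • th') - (c • ϑ + (1-c) • ϑ')‖ ^ 2 / (2*(c*g + (1-c)*g')) ≤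
      c * (‖th - ϑ‖^2/(2*g)) + (1-c) * (‖th' - ϑ'‖^2/(2*g')) := by
    calc ‖(c • th + (1-c) • th') - (c • ϑ + (1-c) • ϑ')‖ ^ 2 / (2*(c*g + (1-c)*g'))
        ≤ (c * ‖th - ϑ‖ + (1-c) * ‖th' - ϑ'‖) ^ 2 / (2*(c*g + (1-c)*g')) := by
          gcongr
      _ ≤ _ := qol_scalar _ _ _ _ _ (norm_nonneg _) (norm_nonneg _) hg hg' hc hc1
  unfold fAux
  have hlin : (c*g + (1-c)*g') * Γ ^ 2 * n / 2 =
      c * (g * Γ ^ 2 * n / 2) + (1-c) * (g' * Γ ^ 2 * n / 2) := by ring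
  rw [hlin]
  linarith [hsum, hquad]

lemma fAux_lower {d n : ℕ} (ℓ : ℕ → ℕ → EuclideanSpace ℝ (Fin d) → ℝ)
    (Γ C : ℝ) (hΓ : 0 ≤ Γ) (hC : 0 < C) (t : ℕ)
    (hlipt : ∀ i ∈ Finset.Icc 1 n,
      ∀ x y : EuclideanSpace ℝ (Fin d), |ℓ t i x - ℓ t i y| ≤ Γ * ‖x - y‖)
    (ϑ : EuclideanSpace ℝ (Fin d)) (g : ℝ) (hg : 0 < g)
    (th : EuclideanSpace ℝ (Fin d)) (hth : ‖th‖ ≤ C) :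
    ∑ i ∈ Finset.Icc 1 n, ℓ t i 0 - n * Γ * C ≤ fAux ℓ Γ n t th ϑ g := by
  have hterm : ∀ i ∈ Finset.Icc 1 n, ℓ t i 0 - Γ * C ≤ ℓ t i th := by
    intro i hi
    have h1 := hlipt i hi 0 th
    have h2 : ‖(0 : EuclideanSpace ℝ (Fin d)) - th‖ = ‖th‖ := by simp
    rw [h2] at h1
    have h3 : ℓ t i 0 - ℓ t i th ≤ Γ * ‖th‖ := (abs_le.1 h1).2
    have h4 : Γ * ‖th‖ ≤ Γ * C := mul_le_mul_of_nonneg_left hth hΓ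
    linarith
  have hsum : ∑ i ∈ Finset.Icc 1 n, (ℓ t i 0 - Γ * C) ≤ ∑ i ∈ Finset.Icc 1 n, ℓ t i th :=
    Finset.sum_le_sum hterm
  rw [Finset.sum_sub_distrib, Finset.sum_const, Nat.card_Icc, Nat.add_sub_cancel,
    nsmul_eq_mul] at hsum
  have h5 : 0 ≤ g * Γ ^ 2 * n / 2 := by positivity
  have h6 : 0 ≤ ‖th - ϑ‖ ^ 2 / (2 * g) := by positivity
  unfold fAux
  nlinarith

/-- Intermediate bound in the proof of Theorem 1 of the paper (before optimizing
    over the within-task step size γ). Here σ² = (1/T)Σ_t ‖θ_t - θ̄‖². -/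
theorem oga_meta_learning_regret_intermediate
    (d n T : ℕ) (hd : 1 ≤ d) (hn : 1 ≤ n) (hT : 1 ≤ T)
    (Γ C β : ℝ) (hΓ : 0 < Γ) (hC : 0 < C) (hβ : 0 < β)
    (hβC : (n : ℝ) ^ (-β) ≤ C ^ 2)
    (ℓ : ℕ → ℕ → EuclideanSpace ℝ (Fin d) → ℝ)
    (hconv : ∀ t ∈ Finset.Icc 1 T, ∀ i ∈ Finset.Icc 1 n,
      ∀ x y : EuclideanSpace ℝ (Fin d), ∀ c : ℝ, 0 ≤ c → c ≤ 1 →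
        ℓ t i (c • x + (1 - c) • y) ≤ c * ℓ t i x + (1 - c) * ℓ t i y)
    (hlip : ∀ t ∈ Finset.Icc 1 T, ∀ i ∈ Finset.Icc 1 n,
      ∀ x y : EuclideanSpace ℝ (Fin d), |ℓ t i x - ℓ t i y| ≤ Γ * ‖x - y‖)
    (γlo γhi L α : ℝ)
    (hγlo : γlo = (n : ℝ) ^ (-β)) (hγhi : γhi = C ^ 2)
    (hLdef : L = Real.sqrt ((n : ℝ) ^ 2 * Γ ^ 4 / 4 + 4 * C ^ 2 / γlo ^ 2 +
      4 * C ^ 4 / γlo ^ 4))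
    (hαdef : α = (C / L) * Real.sqrt ((4 + C ^ 2) / T))
    (ML : ℕ → EuclideanSpace ℝ (Fin d) → ℝ → ℝ)
    (hML : ∀ t ∈ Finset.Icc 1 T, ∀ ϑ : EuclideanSpace ℝ (Fin d), ∀ γ : ℝ,
      ML t ϑ γ = sInf {r : ℝ | ∃ θ : EuclideanSpace ℝ (Fin d), ‖θ‖ ≤ C ∧
        r = ∑ i ∈ Finset.Icc 1 n, ℓ t i θ + γ * Γ ^ 2 * n / 2 + ‖θ - ϑ‖ ^ 2 / (2 * γ)})
    (lam : ℕ → EuclideanSpace ℝ (Fin d) × ℝ)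
    (hlam1 : ‖(lam 1).1‖ ≤ C ∧ (lam 1).2 ∈ Set.Icc γlo γhi)
    (hmem : ∀ t ∈ Finset.Icc 1 T,
      ‖(lam (t + 1)).1‖ ≤ C ∧ (lam (t + 1)).2 ∈ Set.Icc γlo γhi)
    (hmin : ∀ t ∈ Finset.Icc 1 T, ∀ ϑ : EuclideanSpace ℝ (Fin d), ‖ϑ‖ ≤ C →
      ∀ γ ∈ Set.Icc γlo γhi,
      ML t (lam (t + 1)).1 (lam (t + 1)).2 +
        (‖(lam (t + 1)).1 - (lam t).1‖ ^ 2 + ((lam (t + 1)).2 - (lam t).2) ^ 2) / (2 * α)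
      ≤ ML t ϑ γ + (‖ϑ - (lam t).1‖ ^ 2 + (γ - (lam t).2) ^ 2) / (2 * α))
    (s : ℕ → ℝ) (hs : ∀ t ∈ Finset.Icc 1 T, s t ≤ ML t (lam t).1 (lam t).2) :
    ∀ θ : ℕ → EuclideanSpace ℝ (Fin d), (∀ t ∈ Finset.Icc 1 T, ‖θ t‖ ≤ C) →
      ∀ γ ∈ Set.Icc γlo γhi,
      ∑ t ∈ Finset.Icc 1 T, s t ≤
        ∑ t ∈ Finset.Icc 1 T, ∑ i ∈ Finset.Icc 1 n, ℓ t i (θ t)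
        + γ * Γ ^ 2 * n * T / 2
        + T * ((1 / (T : ℝ)) * ∑ t ∈ Finset.Icc 1 T,
            ‖θ t - (1 / (T : ℝ)) • ∑ u ∈ Finset.Icc 1 T, θ u‖ ^ 2) / (2 * γ)
        + C * L * Real.sqrt ((4 + C ^ 2) * T) := by
  intro θ hθ γ hγI
  classical
  have hn0 : (0:ℝ) < n := by exact_mod_cast hn
  have hT0 : (0:ℝ) < T := by exact_mod_cast hT
  have hγlo0 : 0 < γlo := by rw [hγlo]; exact Real.rpow_pos_of_pos hn0 _
  have hγ0 : 0 < γ := lt_of_lt_of_le hγlo0 hγI.1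
  have hL0 : 0 < L := by
    rw [hLdef]; apply Real.sqrt_pos.2; positivity
  have hα0 : 0 < α := by
    rw [hαdef]
    exact mul_pos (div_pos hC hL0) (Real.sqrt_pos.2 (by positivity))
  have hML' : ∀ t ∈ Finset.Icc 1 T, ∀ ϑ : EuclideanSpace ℝ (Fin d), ∀ g : ℝ,
      ML t ϑ g = sInf {r : ℝ | ∃ th : EuclideanSpace ℝ (Fin d), ‖th‖ ≤ C ∧
        r = fAux ℓ Γ n t th ϑ g} := hML
  have hne : ∀ (t : ℕ) (ϑ : EuclideanSpace ℝ (Fin d)) (g : ℝ),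
      {r : ℝ | ∃ th : EuclideanSpace ℝ (Fin d), ‖th‖ ≤ C ∧
        r = fAux ℓ Γ n t th ϑ g}.Nonempty :=
    fun t ϑ g => ⟨fAux ℓ Γ n t 0 ϑ g, 0, by simpa using hC.le, rfl⟩
  have hbdd : ∀ t ∈ Finset.Icc 1 T, ∀ (ϑ : EuclideanSpace ℝ (Fin d)) (g : ℝ), 0 < g →
      BddBelow {r : ℝ | ∃ th : EuclideanSpace ℝ (Fin d), ‖th‖ ≤ C ∧
        r = fAux ℓ Γ n t th ϑ g} := by
    intro t ht ϑ g hg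
    refine ⟨∑ i ∈ Finset.Icc 1 n, ℓ t i 0 - n * Γ * C, ?_⟩
    rintro r ⟨th, hth, rfl⟩
    exact fAux_lower ℓ Γ C hΓ.le hC t (fun i hi => hlip t ht i hi) ϑ g hg th hth
  have hup : ∀ t ∈ Finset.Icc 1 T, ∀ (ϑ : EuclideanSpace ℝ (Fin d)) (g : ℝ), 0 < g →
      ∀ th : EuclideanSpace ℝ (Fin d), ‖th‖ ≤ C →
      ML t ϑ g ≤ fAux ℓ Γ n t th ϑ g := by
    intro t ht ϑ g hg th hth
    rw [hML' t ht]
    exact csInf_le (hbdd t ht ϑ g hg) ⟨th, hth, rfl⟩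
  have happrox : ∀ t ∈ Finset.Icc 1 T, ∀ (ϑ : EuclideanSpace ℝ (Fin d)) (g : ℝ), ∀ ε : ℝ,
      0 < ε → ∃ th : EuclideanSpace ℝ (Fin d), ‖th‖ ≤ C ∧
        fAux ℓ Γ n t th ϑ g < ML t ϑ g + ε := by
    intro t ht ϑ g ε hε
    obtain ⟨r, ⟨th, hth, rfl⟩, hr⟩ := Real.lt_sInf_add_pos (hne t ϑ g) hε
    exact ⟨th, hth, by rw [hML' t ht]; exact hr⟩
  have hMLlip : ∀ t ∈ Finset.Icc 1 T, ∀ (ϑ ϑ' : EuclideanSpace ℝ (Fin d)) (g g' : ℝ),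
      ‖ϑ‖ ≤ C → ‖ϑ'‖ ≤ C → g ∈ Set.Icc γlo γhi → g' ∈ Set.Icc γlo γhi →
      ML t ϑ g ≤ ML t ϑ' g' + L * Real.sqrt (‖ϑ - ϑ'‖^2 + (g - g')^2) := by
    intro t ht ϑ ϑ' g g' hϑ hϑ' hgI hg'I
    have hg0 : 0 < g := lt_of_lt_of_le hγlo0 hgI.1
    refine le_of_forall_pos_le_add fun ε hε => ?_
    obtain ⟨th, hth, hfth⟩ := happrox t ht ϑ' g' ε hε
    have h1 : ML t ϑ g ≤ fAux ℓ Γ n t th ϑ g := hup t ht ϑ g hg0 th hth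
    have h2 := fAux_lip (n := n) ℓ Γ C γlo hC hγlo0 t th ϑ ϑ' g g' hth hϑ hϑ' hgI.1 hg'I.1
    rw [hLdef]
    linarith
  have hMLconv : ∀ t ∈ Finset.Icc 1 T, ∀ (ϑ ϑ' : EuclideanSpace ℝ (Fin d)) (g g' c : ℝ),
      ‖ϑ‖ ≤ C → ‖ϑ'‖ ≤ C → 0 < g → 0 < g' → 0 ≤ c → c ≤ 1 →
      ML t (c • ϑ + (1-c) • ϑ') (c*g + (1-c)*g') ≤ c * ML t ϑ g + (1-c) * ML t ϑ' g' := by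
    intro t ht ϑ ϑ' g g' c hϑ hϑ' hg0 hg'0 hc hc1
    refine le_of_forall_pos_le_add fun ε hε => ?_
    obtain ⟨th, hth, h1⟩ := happrox t ht ϑ g ε hε
    obtain ⟨th', hth', h2⟩ := happrox t ht ϑ' g' ε hε
    have hmixg : 0 < c*g + (1-c)*g' := combo_pos g g' c hg0 hg'0 hc hc1
    have h3 : ML t (c • ϑ + (1-c) • ϑ') (c*g + (1-c)*g') ≤
        fAux ℓ Γ n t (c • th + (1-c) • th') (c • ϑ + (1-c) • ϑ') (c*g + (1-c)*g') :=
      hup t ht _ _ hmixg _ (norm_combo_le th th' C c hth hth' hc hc1)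
    have h4 := fAux_convex ℓ Γ t (fun i hi => hconv t ht i hi) th th' ϑ ϑ' g g' c hg0 hg'0 hc hc1
    have h5 : c * fAux ℓ Γ n t th ϑ g ≤ c * ML t ϑ g + c * ε := by nlinarith
    have h6 : (1-c) * fAux ℓ Γ n t th' ϑ' g' ≤ (1-c) * ML t ϑ' g' + (1-c) * ε := by nlinarith
    have h7 : c * ε + (1-c) * ε = ε := by ring
    linarith
  have hlamΛ : ∀ t ∈ Finset.Icc 1 T, ‖(lam t).1‖ ≤ C ∧ (lam t).2 ∈ Set.Icc γlo γhi := by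
    intro t ht
    rcases Finset.mem_Icc.1 ht with ⟨h1, h2⟩
    rcases Nat.exists_eq_add_of_le h1 with ⟨u, rfl⟩
    match u with
    | 0 => simpa using hlam1
    | v + 1 =>
      have he : 1 + (v + 1) = (1 + v) + 1 := by ring
      rw [he]
      exact hmem (1 + v) (Finset.mem_Icc.2 ⟨by omega, by omega⟩)
  set θb : EuclideanSpace ℝ (Fin d) := (1 / (T : ℝ)) • ∑ u ∈ Finset.Icc 1 T, θ u with hθbdef
  have hθbC : ‖θb‖ ≤ C := by
    rw [hθbdef, norm_smul, Real.norm_eq_abs, abs_of_pos (by positivity : (0:ℝ) < 1 / T)]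
    have h1 : ‖∑ u ∈ Finset.Icc 1 T, θ u‖ ≤ ∑ u ∈ Finset.Icc 1 T, C :=
      (norm_sum_le _ _).trans (Finset.sum_le_sum hθ)
    rw [Finset.sum_const, Nat.card_Icc, Nat.add_sub_cancel, nsmul_eq_mul] at h1
    calc (1 / (T:ℝ)) * ‖∑ u ∈ Finset.Icc 1 T, θ u‖ ≤ (1 / (T:ℝ)) * ((T:ℝ) * C) :=
          mul_le_mul_of_nonneg_left h1 (by positivity)
      _ = C := by field_simp
  set Df : ℕ → ℝ := fun u => ‖θb - (lam u).1‖ ^ 2 + (γ - (lam u).2) ^ 2 with hDfdef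
  have key : ∀ t ∈ Finset.Icc 1 T, ML t (lam t).1 (lam t).2 ≤
      ML t θb γ + (Df t - Df (t+1)) / (2*α) + α * L^2 / 2 := by
    intro t ht
    obtain ⟨hQ1, hQ2⟩ := hlamΛ t ht
    obtain ⟨hP1, hP2⟩ := hmem t ht
    have hP20 : 0 < (lam (t+1)).2 := lt_of_lt_of_le hγlo0 hP2.1
    -- Step D : strong convexity at the minimizer
    have stepD : ML t (lam (t+1)).1 (lam (t+1)).2
        + (‖(lam (t+1)).1 - (lam t).1‖^2 + ((lam (t+1)).2 - (lam t).2)^2) / (2*α)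
        + (‖θb - (lam (t+1)).1‖^2 + (γ - (lam (t+1)).2)^2) / (2*α)
        ≤ ML t θb γ + (‖θb - (lam t).1‖^2 + (γ - (lam t).2)^2) / (2*α) := by
      refine le_of_forall_pos_le_add fun ε hε => ?_
      have hK0 : 0 ≤ (‖θb - (lam (t+1)).1‖^2 + (γ - (lam (t+1)).2)^2) / (2*α) := by positivity
      set K := (‖θb - (lam (t+1)).1‖^2 + (γ - (lam (t+1)).2)^2) / (2*α) with hKdef
      set c : ℝ := min 1 (ε / (K+1)) with hcdef
      have hc0 : 0 < c := lt_min one_pos (by positivity)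
      have hc1 : c ≤ 1 := min_le_left _ _
      have hcK : c * K ≤ ε := by
        have h1 : c ≤ ε / (K+1) := min_le_right _ _
        calc c * K ≤ (ε / (K+1)) * K := mul_le_mul_of_nonneg_right h1 hK0
          _ ≤ ε := by
            rw [div_mul_eq_mul_div, div_le_iff₀ (by positivity)]
            nlinarith
      have hmixϑ : ‖c • θb + (1-c) • (lam (t+1)).1‖ ≤ C :=
        norm_combo_le θb (lam (t+1)).1 C c hθbC hP1 hc0.le hc1
      have hmixg : c * γ + (1-c) * (lam (t+1)).2 ∈ Set.Icc γlo γhi :=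
        combo_mem_Icc γlo γhi γ (lam (t+1)).2 c hγI hP2 hc0.le hc1
      have hconvML := hMLconv t ht θb (lam (t+1)).1 γ (lam (t+1)).2 c hθbC hP1 hγ0 hP20
        hc0.le hc1
      have hminapp := hmin t ht (c • θb + (1-c) • (lam (t+1)).1) hmixϑ
        (c * γ + (1-c) * (lam (t+1)).2) hmixg
      have hv : (c • θb + (1-c) • (lam (t+1)).1) - (lam t).1 =
          c • (θb - (lam t).1) + (1-c) • ((lam (t+1)).1 - (lam t).1) := by
        rw [smul_sub, smul_sub]
        module
      have hid1 : ‖(c • θb + (1-c) • (lam (t+1)).1) - (lam t).1‖^2 =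
          c * ‖θb - (lam t).1‖^2 + (1-c) * ‖(lam (t+1)).1 - (lam t).1‖^2
            - c * (1-c) * ‖θb - (lam (t+1)).1‖^2 := by
        rw [hv, norm_combo,
          show (θb - (lam t).1) - ((lam (t+1)).1 - (lam t).1) = θb - (lam (t+1)).1 by abel]
      have hid2 : ((c * γ + (1-c) * (lam (t+1)).2) - (lam t).2)^2 =
          c * (γ - (lam t).2)^2 + (1-c) * ((lam (t+1)).2 - (lam t).2)^2
            - c * (1-c) * (γ - (lam (t+1)).2)^2 := by ring
      have hsplit : (c * ‖θb - (lam t).1‖^2 + (1-c) * ‖(lam (t+1)).1 - (lam t).1‖^2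
            - c * (1-c) * ‖θb - (lam (t+1)).1‖^2
          + (c * (γ - (lam t).2)^2 + (1-c) * ((lam (t+1)).2 - (lam t).2)^2
            - c * (1-c) * (γ - (lam (t+1)).2)^2)) / (2*α)
          = c * ((‖θb - (lam t).1‖^2 + (γ - (lam t).2)^2) / (2*α))
          + (1-c) * ((‖(lam (t+1)).1 - (lam t).1‖^2 + ((lam (t+1)).2 - (lam t).2)^2) / (2*α))
          - c * (1-c) * ((‖θb - (lam (t+1)).1‖^2 + (γ - (lam (t+1)).2)^2) / (2*α)) := by
        field_simp
        ring
      rw [hid1, hid2] at hminapp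
      rw [hsplit] at hminapp
      rw [← hKdef] at hminapp
      -- divide by c
      have h8 : c * (ML t (lam (t+1)).1 (lam (t+1)).2
          + (‖(lam (t+1)).1 - (lam t).1‖^2 + ((lam (t+1)).2 - (lam t).2)^2) / (2*α)
          + (1-c) * K)
          ≤ c * (ML t θb γ + (‖θb - (lam t).1‖^2 + (γ - (lam t).2)^2) / (2*α)) := by
        nlinarith [hminapp, hconvML]
      have h9 := le_of_mul_le_mul_left h8 hc0
      linarith
    -- Step E : Lipschitz + AM-GM
    have hlipQP : ML t (lam t).1 (lam t).2 ≤ ML t (lam (t+1)).1 (lam (t+1)).2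
        + L * Real.sqrt (‖(lam t).1 - (lam (t+1)).1‖^2 + ((lam t).2 - (lam (t+1)).2)^2) :=
      hMLlip t ht (lam t).1 (lam (t+1)).1 (lam t).2 (lam (t+1)).2 hQ1 hP1 hQ2 hP2
    have hsym : ‖(lam t).1 - (lam (t+1)).1‖^2 + ((lam t).2 - (lam (t+1)).2)^2
        = ‖(lam (t+1)).1 - (lam t).1‖^2 + ((lam (t+1)).2 - (lam t).2)^2 := by
      rw [norm_sub_rev]; ring
    rw [hsym] at hlipQP
    have hfam : L * Real.sqrt (‖(lam (t+1)).1 - (lam t).1‖^2 + ((lam (t+1)).2 - (lam t).2)^2)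
        ≤ (‖(lam (t+1)).1 - (lam t).1‖^2 + ((lam (t+1)).2 - (lam t).2)^2) / (2*α)
          + α * L^2 / 2 :=
      sqrt_amgm _ L α (by positivity) hL0.le hα0
    have hDft : Df t = ‖θb - (lam t).1‖^2 + (γ - (lam t).2)^2 := by rw [hDfdef]
    have hDft1 : Df (t+1) = ‖θb - (lam (t+1)).1‖^2 + (γ - (lam (t+1)).2)^2 := by rw [hDfdef]
    have hsub : (Df t - Df (t+1)) / (2*α) = Df t / (2*α) - Df (t+1) / (2*α) := by ring
    rw [hsub, hDft, hDft1]
    linarith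
  -- sum up
  have hsum1 : ∑ t ∈ Finset.Icc 1 T, s t ≤
      ∑ t ∈ Finset.Icc 1 T, ML t (lam t).1 (lam t).2 := Finset.sum_le_sum hs
  have hsum2 : ∑ t ∈ Finset.Icc 1 T, ML t (lam t).1 (lam t).2 ≤
      (∑ t ∈ Finset.Icc 1 T, ML t θb γ) + (Df 1 - Df (T+1)) / (2*α)
        + (T : ℝ) * (α * L^2 / 2) := by
    have h1 : ∑ t ∈ Finset.Icc 1 T, ML t (lam t).1 (lam t).2 ≤
        ∑ t ∈ Finset.Icc 1 T, (ML t θb γ + (Df t - Df (t+1)) / (2*α) + α * L^2 / 2) :=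
      Finset.sum_le_sum key
    rw [Finset.sum_add_distrib, Finset.sum_add_distrib, Finset.sum_const, Nat.card_Icc,
      Nat.add_sub_cancel, nsmul_eq_mul] at h1
    have h2 : ∑ t ∈ Finset.Icc 1 T, (Df t - Df (t+1)) / (2*α) = (Df 1 - Df (T+1)) / (2*α) := by
      rw [← Finset.sum_div]
      congr 1
      have h3 : ∑ t ∈ Finset.Icc 1 T, (Df t - Df (t+1)) =
          ∑ i ∈ Finset.range T, (Df (i+1) - Df (i+1+1)) := by
        rw [← Finset.Ico_add_one_right_eq_Icc, Finset.sum_Ico_eq_sum_range]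
        refine Finset.sum_congr (by norm_num) fun i _ => ?_
        have e1 : 1 + i = i + 1 := by omega
        rw [e1]
      rw [h3, Finset.sum_range_sub' (fun j => Df (j+1)) T]
    rw [h2] at h1
    linarith
  have hD1 : Df 1 ≤ 4 * C^2 + C^4 := by
    have hDf1 : Df 1 = ‖θb - (lam 1).1‖^2 + (γ - (lam 1).2)^2 := by rw [hDfdef]
    have h1 : ‖θb - (lam 1).1‖ ≤ 2 * C := by
      have := norm_sub_le θb (lam 1).1
      have h2 := hlam1.1
      linarith
    have h2 : γ - (lam 1).2 ≤ C^2 := by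
      have := hlam1.2.1
      have := hγI.2
      rw [hγhi] at *
      linarith [hγlo0]
    have h3 : -(C^2) ≤ γ - (lam 1).2 := by
      have := hlam1.2.2
      have := hγI.1
      rw [hγhi] at *
      linarith [hγlo0]
    have h4 : (γ - (lam 1).2)^2 ≤ C^4 := by nlinarith
    have h5 : ‖θb - (lam 1).1‖^2 ≤ 4 * C^2 := by nlinarith [norm_nonneg (θb - (lam 1).1)]
    rw [hDf1]
    linarith
  have hDT : 0 ≤ Df (T+1) := by
    have : Df (T+1) = ‖θb - (lam (T+1)).1‖^2 + (γ - (lam (T+1)).2)^2 := by rw [hDfdef]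
    rw [this]; positivity
  -- final arithmetic
  have harith : (4 * C^2 + C^4) / (2*α) + (T : ℝ) * (α * L^2 / 2) ≤
      C * L * Real.sqrt ((4 + C^2) * T) := by
    set S := Real.sqrt ((4 + C^2) * T) with hSdef
    have hS0 : 0 < S := Real.sqrt_pos.2 (by positivity)
    have hS2 : S^2 = (4 + C^2) * T := Real.sq_sqrt (by positivity)
    have hαval : α = C * S / (L * T) := by
      rw [hαdef, hSdef]
      have h1 : (4 + C^2) / (T:ℝ) = ((4 + C^2) * T) / (T:ℝ)^2 := by field_simp
      rw [h1, Real.sqrt_div (by positivity) ((T:ℝ)^2), Real.sqrt_sq hT0.le]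
      field_simp
    have h2 : (4 * C^2 + C^4) / (2*(C * S / (L * T))) = C * (4 + C^2) * L * T / (2*S) := by
      field_simp
    have h3 : C * (4 + C^2) * L * (T:ℝ) / (2*S) = C * L * S / 2 := by
      rw [div_eq_div_iff (by positivity) (by positivity)]
      linear_combination (-2 * C * L) * hS2
    have h4 : (T:ℝ) * ((C * S / (L * T)) * L^2 / 2) = C * L * S / 2 := by
      field_simp
    rw [hαval, h2]
    linarith
  -- assemble
  have hupper : ∑ t ∈ Finset.Icc 1 T, ML t θb γ ≤
      ∑ t ∈ Finset.Icc 1 T, fAux ℓ Γ n t (θ t) θb γ :=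
    Finset.sum_le_sum (fun t ht => hup t ht θb γ hγ0 (θ t) (hθ t ht))
  have hexp : ∑ t ∈ Finset.Icc 1 T, fAux ℓ Γ n t (θ t) θb γ =
      ∑ t ∈ Finset.Icc 1 T, ∑ i ∈ Finset.Icc 1 n, ℓ t i (θ t) + γ * Γ^2 * n * T / 2
      + (∑ t ∈ Finset.Icc 1 T, ‖θ t - θb‖^2) / (2*γ) := by
    unfold fAux
    rw [Finset.sum_add_distrib, Finset.sum_add_distrib, Finset.sum_const, Nat.card_Icc,
      Nat.add_sub_cancel, nsmul_eq_mul, ← Finset.sum_div]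
    ring
  have hgoalσ : (T:ℝ) * ((1 / (T:ℝ)) * ∑ t ∈ Finset.Icc 1 T, ‖θ t - θb‖^2) / (2*γ)
      = (∑ t ∈ Finset.Icc 1 T, ‖θ t - θb‖^2) / (2*γ) := by
    rw [mul_comm (T:ℝ), mul_assoc]
    congr 1
    field_simp
  have hDdiv : (Df 1 - Df (T+1)) / (2*α) ≤ (4 * C^2 + C^4) / (2*α) := by
    gcongr
    · linarith
  rw [hgoalσ]
  linarith [hsum1, hsum2, hupper, hexp, hDdiv, harith]
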